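/- Let ε > 0, L > 0, d ∈ ℕ, and κ ∈ ℕ with κ ≥ d + 1. Then for all Δx ∈ (0, L], the convex combination parameter θ(Δx) := ε/(ε + (Δx/L)^κ) satisfies |θ(Δx) − 1| ≤ Δx^{d+1}/(ε L^{d+1}). In particular θ(Δx) = 1 + O(Δx^{d+1}) as Δx → 0⁺. -/

import Mathlib

/-- Away from steady states, the convex combination parameter
`θ(Δx) = ε/(ε + (Δx/L)^κ)` with `κ ≥ d + 1` is an approximation of `1` up to
order `Δx^{d+1}`: `|θ(Δx) − 1| ≤ Δx^{d+1}/(ε L^{d+1})` for all `Δx ∈ (0, L]`. -/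
theorem theta_high_order_approx_of_one (ε L : ℝ) (d κ : ℕ)
    (hε : 0 < ε) (hL : 0 < L) (hκ : d + 1 ≤ κ) :
    ∀ Δx : ℝ, 0 < Δx → Δx ≤ L →
      |ε / (ε + (Δx / L) ^ κ) - 1| ≤ Δx ^ (d + 1) / (ε * L ^ (d + 1)) := by
  intro Δx hx hxL
  set r : ℝ := Δx / L with hr
  have hr0 : 0 < r := div_pos hx hL
  have hr1 : r ≤ 1 := (div_le_one hL).mpr hxL
  have hden : 0 < ε + r ^ κ := by positivity
  have h1 : ε / (ε + r ^ κ) - 1 = -(r ^ κ / (ε + r ^ κ)) := by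
    field_simp
    ring
  rw [h1, abs_neg, abs_of_nonneg (by positivity)]
  have h2 : r ^ κ / (ε + r ^ κ) ≤ r ^ κ / ε :=
    div_le_div_of_nonneg_left (by positivity) hε (le_add_of_nonneg_right (by positivity))
  have h3 : r ^ κ ≤ r ^ (d + 1) := pow_le_pow_of_le_one hr0.le hr1 hκ
  have h4 : r ^ (d + 1) / ε = Δx ^ (d + 1) / (ε * L ^ (d + 1)) := by
    rw [hr, div_pow]
    field_simp
  calc r ^ κ / (ε + r ^ κ) ≤ r ^ κ / ε := h2
    _ ≤ r ^ (d + 1) / ε := by gcongr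
    _ = Δx ^ (d + 1) / (ε * L ^ (d + 1)) := h4
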